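/- Let $\phi : \mathbb{R}^d \to \mathbb{R}$ be an integrable function with integrable Fourier transform such that $\phi \equiv 1$ on a neighborhood of a point $x_0 \ne 0$ (in particular $\phi(x_0) = \phi(0) = 1$). Then the Fourier transform $\hat\phi$ cannot be nonnegative everywhere. -/

import Mathlib

open MeasureTheory Real Filter FourierTransform

noncomputable def ft {d : ℕ} (f : EuclideanSpace ℝ (Fin d) → ℂ)
    (ω : EuclideanSpace ℝ (Fin d)) : ℂ :=
  ∫ x, f x * Complex.exp (-Complex.I * ((inner ℝ x ω : ℝ) : ℂ))

lemma my_integral_ofReal {α : Type*} [MeasurableSpace α] {μ : Measure α} (f : α → ℝ) :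
    ∫ x, ((f x : ℂ)) ∂μ = ((∫ x, f x ∂μ : ℝ) : ℂ) :=
  integral_ofReal

lemma ft_eq {d : ℕ} (f : EuclideanSpace ℝ (Fin d) → ℂ) (ξ : EuclideanSpace ℝ (Fin d)) :
    ft f ((2 * π) • ξ) = 𝓕 f ξ := by
  rw [Real.fourier_eq']
  unfold ft
  congr 1
  ext v
  rw [smul_eq_mul, real_inner_smul_right]
  push_cast
  ring_nf

lemma level_null {d : ℕ} (x₀ : EuclideanSpace ℝ (Fin d)) (hx₀ : x₀ ≠ 0) (n : ℤ) :
    volume {v : EuclideanSpace ℝ (Fin d) | (inner ℝ v x₀ : ℝ) = n} = 0 := by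
  set K : Submodule ℝ (EuclideanSpace ℝ (Fin d)) :=
    LinearMap.ker ((innerSL ℝ x₀).toLinearMap) with hK
  have hx00 : (inner ℝ x₀ x₀ : ℝ) ≠ 0 := by
    rw [real_inner_self_eq_norm_sq]
    exact pow_ne_zero 2 (norm_ne_zero_iff.2 hx₀)
  have hKne : K ≠ ⊤ := by
    intro h
    have : x₀ ∈ K := h ▸ Submodule.mem_top
    simp only [hK, LinearMap.mem_ker, ContinuousLinearMap.coe_coe, innerSL_apply_apply] at this
    exact hx00 this
  have hKnull : volume (K : Set (EuclideanSpace ℝ (Fin d))) = 0 :=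
    Measure.addHaar_submodule volume K hKne
  set c : EuclideanSpace ℝ (Fin d) := ((n : ℝ) / (inner ℝ x₀ x₀ : ℝ)) • x₀ with hc
  have : {v : EuclideanSpace ℝ (Fin d) | (inner ℝ v x₀ : ℝ) = n} =
      (fun v => v + (-c)) ⁻¹' (K : Set (EuclideanSpace ℝ (Fin d))) := by
    ext v
    simp only [Set.mem_setOf_eq, Set.mem_preimage, SetLike.mem_coe, hK, LinearMap.mem_ker,
      ContinuousLinearMap.coe_coe, innerSL_apply_apply, hc]
    rw [inner_add_right, inner_neg_right, real_inner_smul_right]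
    rw [div_mul_cancel₀ _ hx00]
    constructor
    · intro h; rw [real_inner_comm] at h; rw [h]; ring
    · intro h; rw [real_inner_comm]; linarith
  rw [this, measure_preimage_add_right]
  exact hKnull

/-- an integrable function with integrable Fourier transform which equals 1
on a neighborhood of some `x₀ ≠ 0` (and at `0`) cannot have an everywhere nonnegative
(real) Fourier transform. -/
theorem stmt1 (d : ℕ) (hd : 0 < d) (φ : EuclideanSpace ℝ (Fin d) → ℝ)
    (x₀ : EuclideanSpace ℝ (Fin d)) (hx₀ : x₀ ≠ 0)
    (hcont : Continuous φ)
    (hint : Integrable φ)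
    (hft_int : Integrable (ft (fun x => (φ x : ℂ))))
    (hnbhd : ∀ᶠ x in nhds x₀, φ x = 1)
    (h0 : φ 0 = 1) :
    ¬ (∀ ω, 0 ≤ (ft (fun x => (φ x : ℂ)) ω).re ∧ (ft (fun x => (φ x : ℂ)) ω).im = 0) := by
  intro h
  set f : EuclideanSpace ℝ (Fin d) → ℂ := fun x => (φ x : ℂ) with hf
  have hfi : Integrable f := hint.ofReal
  have hfc : Continuous f := Complex.continuous_ofReal.comp hcont
  have htp : (2 * π : ℝ) ≠ 0 := by positivity
  have hGi : Integrable (𝓕 f) := by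
    have : Integrable (fun ξ => ft f ((2 * π) • ξ)) :=
      (integrable_comp_smul_iff volume (ft f) htp).2 hft_int
    exact this.congr (Filter.Eventually.of_forall fun ξ => ft_eq f ξ)
  set G := 𝓕 f with hGdef
  have hG : ∀ ξ, 0 ≤ (G ξ).re ∧ (G ξ).im = 0 := by
    intro ξ
    have := h ((2 * π) • ξ)
    rwa [ft_eq f ξ] at this
  have hinv : ∀ x, (𝓕⁻ G) x = f x := by
    intro x
    rw [hfc.fourierInv_fourier_eq hfi hGi]
  set g : EuclideanSpace ℝ (Fin d) → ℝ := fun ξ => (G ξ).re with hgdef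
  have hGre : ∀ ξ, G ξ = (g ξ : ℂ) := fun ξ => Complex.ext rfl (by simp [(hG ξ).2])
  have hgi : Integrable g := hGi.re
  have hgnn : ∀ ξ, 0 ≤ g ξ := fun ξ => (hG ξ).1
  -- integral of g equals 1
  have h1 : ∫ ξ, g ξ = 1 := by
    have h0' : (𝓕⁻ G) 0 = f 0 := hinv 0
    rw [Real.fourierInv_eq'] at h0'
    simp only [inner_zero_right, mul_zero, Complex.ofReal_zero, zero_mul, Complex.exp_zero,
      one_smul] at h0'
    have hGg : ∫ ξ, G ξ = ((∫ ξ, g ξ : ℝ) : ℂ) := by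
      rw [← my_integral_ofReal]
      exact integral_congr_ae (Filter.Eventually.of_forall fun ξ => hGre ξ)
    have : ((∫ ξ, g ξ : ℝ) : ℂ) = 1 := by rw [← hGg, h0', hf]; simp [h0]
    exact_mod_cast this
  have hx0eq : φ x₀ = 1 := hnbhd.self_of_nhds
  set c : EuclideanSpace ℝ (Fin d) → ℝ := fun ξ => Real.cos (2 * π * (inner ℝ ξ x₀ : ℝ)) with hcdef
  set s : EuclideanSpace ℝ (Fin d) → ℝ := fun ξ => Real.sin (2 * π * (inner ℝ ξ x₀ : ℝ)) with hsdef
  have hinner_cont : Continuous fun ξ : EuclideanSpace ℝ (Fin d) => (inner ℝ ξ x₀ : ℝ) :=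
    continuous_id.inner continuous_const
  have hcg_int : Integrable (fun ξ => c ξ * g ξ) := by
    apply hgi.bdd_mul (c := 1)
    · exact (Real.continuous_cos.comp (continuous_const.mul hinner_cont)).aestronglyMeasurable
    · exact Filter.Eventually.of_forall fun ξ => by simpa using Real.abs_cos_le_one _
  have hsg_int : Integrable (fun ξ => s ξ * g ξ) := by
    apply hgi.bdd_mul (c := 1)
    · exact (Real.continuous_sin.comp (continuous_const.mul hinner_cont)).aestronglyMeasurable
    · exact Filter.Eventually.of_forall fun ξ => by simpa using Real.abs_sin_le_one _
  -- integral of c * g equals 1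
  have h2 : ∫ ξ, c ξ * g ξ = 1 := by
    have h0' : (𝓕⁻ G) x₀ = f x₀ := hinv x₀
    rw [Real.fourierInv_eq'] at h0'
    have hpt : ∀ ξ, Complex.exp (((2 * π * (inner ℝ ξ x₀ : ℝ) : ℝ) : ℂ) * Complex.I) • G ξ =
        ((c ξ * g ξ : ℝ) : ℂ) + ((s ξ * g ξ : ℝ) : ℂ) * Complex.I := by
      intro ξ
      rw [hGre ξ, smul_eq_mul, Complex.exp_mul_I, hcdef, hsdef]
      simp only [← Complex.ofReal_cos, ← Complex.ofReal_sin]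
      push_cast
      ring
    have heq : ∫ ξ, Complex.exp (((2 * π * (inner ℝ ξ x₀ : ℝ) : ℝ) : ℂ) * Complex.I) • G ξ =
        ((∫ ξ, c ξ * g ξ : ℝ) : ℂ) + ((∫ ξ, s ξ * g ξ : ℝ) : ℂ) * Complex.I := by
      have hcgC : Integrable (fun ξ => ((c ξ * g ξ : ℝ) : ℂ)) := by exact hcg_int.ofReal
      have hsgC : Integrable (fun ξ => ((s ξ * g ξ : ℝ) : ℂ) * Complex.I) := by
        exact hsg_int.ofReal.mul_const _
      rw [integral_congr_ae (Filter.Eventually.of_forall hpt),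
        integral_add hcgC hsgC, integral_mul_const, my_integral_ofReal, my_integral_ofReal]
    rw [heq] at h0'
    have : (((∫ ξ, c ξ * g ξ : ℝ) : ℂ) + ((∫ ξ, s ξ * g ξ : ℝ) : ℂ) * Complex.I) = 1 := by
      rw [h0', hf]; simp [hx0eq]
    have := congrArg Complex.re this
    simpa using this
  have hint4 : Integrable (fun ξ => (1 - c ξ) * g ξ) :=
    (hgi.sub hcg_int).congr (Filter.Eventually.of_forall fun ξ => by
      simp only [Pi.sub_apply]; ring)
  have h3 : ∫ ξ, (1 - c ξ) * g ξ = 0 := by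
    have : (fun ξ => (1 - c ξ) * g ξ) = fun ξ => g ξ - c ξ * g ξ := by
      ext ξ; ring
    rw [this, integral_sub hgi hcg_int, h1, h2, sub_self]
  have hnn : 0 ≤ᵐ[volume] fun ξ => (1 - c ξ) * g ξ := by
    apply Filter.Eventually.of_forall
    intro ξ
    simp only [Pi.zero_apply]
    have h1' : c ξ ≤ 1 := Real.cos_le_one _
    have h2' := hgnn ξ
    nlinarith
  have hzero : (fun ξ => (1 - c ξ) * g ξ) =ᵐ[volume] 0 :=
    (integral_eq_zero_iff_of_nonneg_ae hnn hint4).1 h3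
  have hSnull : volume {ξ : EuclideanSpace ℝ (Fin d) | c ξ = 1} = 0 := by
    have hsub : {ξ : EuclideanSpace ℝ (Fin d) | c ξ = 1} ⊆
        ⋃ n : ℤ, {ξ : EuclideanSpace ℝ (Fin d) | (inner ℝ ξ x₀ : ℝ) = n} := by
      intro ξ hξ
      simp only [Set.mem_setOf_eq, hcdef] at hξ
      rcases (Real.cos_eq_one_iff _).1 hξ with ⟨n, hn⟩
      refine Set.mem_iUnion.2 ⟨n, ?_⟩
      simp only [Set.mem_setOf_eq]
      have h' : (2 * π) * (inner ℝ ξ x₀ : ℝ) = (2 * π) * n := by linarith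
      exact mul_left_cancel₀ htp h'
    exact measure_mono_null hsub (measure_iUnion_null fun n => level_null x₀ hx₀ n)
  have hgzero : g =ᵐ[volume] 0 := by
    have hcompl : ∀ᵐ ξ ∂volume, c ξ ≠ 1 := by
      rw [ae_iff]
      simpa using hSnull
    filter_upwards [hzero, hcompl] with ξ h1' h2'
    have hm : (1 - c ξ) * g ξ = 0 := h1'
    rcases mul_eq_zero.1 hm with hcase | hcase
    · exact absurd (by linarith : c ξ = 1) h2'
    · exact hcase
  have : (1 : ℝ) = 0 := by
    rw [← h1, integral_congr_ae hgzero]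
    simp
  norm_num at this
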